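/- Let n ≥ 2 and r ≥ 2. Then: (1) det H_D = det F_D, where F_D = N_r·(X_r + X_r² + ⋯ + X_r^(n−1)); (2) det H_S = 2^((r−1)(n−1)) · det F_S, where F_S = (I + S_rⁿ)·(I − S_r)⁻¹ (over ℚ; I − S_r is invertible); (3) det H_CI = det F_CI, where F_CI = M_r·(I + X_r⁻¹ + X_r⁻² + ⋯ + X_r⁻ⁿ) with X_r⁻¹ = X_rʳ; (4) det H_CII = (−1)^(r(n−1)) · det F_CII, where F_CII = N_r·(I + X_r + X_r² + ⋯ + X_rⁿ). -/

import Mathlib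

open Matrix


set_option linter.unusedSectionVars false
set_option maxHeartbeats 1000000


open Matrix Finset

variable {n : ℕ} {ι : Type} [Fintype ι] [DecidableEq ι] [Nonempty ι]

def bcomp (f : Fin n → Fin n → Matrix ι ι ℚ) : Matrix (Fin n × ι) (Fin n × ι) ℚ :=
  Matrix.of fun p q => f p.1 q.1 p.2 q.2

lemma bcomp_mul (f g : Fin n → Fin n → Matrix ι ι ℚ) :
    bcomp f * bcomp g = bcomp (fun α β => ∑ γ, f α γ * g γ β) := by
  ext p q
  simp only [bcomp, Matrix.mul_apply, Matrix.of_apply, Fintype.sum_prod_type,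
    Matrix.sum_apply]

def blkEquiv (α : Fin n) : {p : Fin n × ι // p.1 = α} ≃ ι where
  toFun p := p.1.2
  invFun x := ⟨(α, x), rfl⟩
  left_inv p := by
    rcases p with ⟨⟨a, x⟩, h⟩
    simp at h; subst h; rfl
  right_inv x := rfl

lemma det_bcomp_of_lowTriangular (f : Fin n → Fin n → Matrix ι ι ℚ)
    (h : ∀ α β, α < β → f α β = 0) :
    (bcomp f).det = ∏ α, (f α α).det := by
  rw [← Matrix.det_transpose]
  have hbt : ((bcomp f)ᵀ).BlockTriangular (fun p => p.1) := by
    intro p q hlt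
    show f q.1 p.1 q.2 p.2 = 0
    rw [h _ _ hlt]; rfl
  rw [hbt.det_fintype]
  refine Finset.prod_congr rfl fun α _ => ?_
  have : ((bcomp f)ᵀ).toSquareBlock (fun p => p.1) α
      = ((f α α)ᵀ).submatrix (blkEquiv α) (blkEquiv α) := by
    ext i j
    rcases i with ⟨⟨a, x⟩, ha⟩; rcases j with ⟨⟨b, y⟩, hb⟩
    simp at ha hb; subst ha; subst hb; rfl
  rw [this, Matrix.det_submatrix_equiv_self, Matrix.det_transpose]

lemma det_bcomp_of_upTriangular (f : Fin n → Fin n → Matrix ι ι ℚ)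
    (h : ∀ α β, β < α → f α β = 0) :
    (bcomp f).det = ∏ α, (f α α).det := by
  have hbt : (bcomp f).BlockTriangular (fun p => p.1) := by
    intro p q hlt
    show f p.1 q.1 p.2 q.2 = 0
    rw [h _ _ hlt]; rfl
  rw [hbt.det_fintype]
  refine Finset.prod_congr rfl fun α _ => ?_
  have : (bcomp f).toSquareBlock (fun p => p.1) α
      = (f α α).submatrix (blkEquiv α) (blkEquiv α) := by
    ext i j
    rcases i with ⟨⟨a, x⟩, ha⟩; rcases j with ⟨⟨b, y⟩, hb⟩
    simp at ha hb; subst ha; subst hb; rfl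
  rw [this, Matrix.det_submatrix_equiv_self]

def bHf (a b c : Matrix ι ι ℚ) : Fin n → Fin n → Matrix ι ι ℚ :=
  fun α β => if α = β then a else if α < β then b else c

def bPf (n : ℕ) (ι : Type) [Fintype ι] [DecidableEq ι] : Fin n → Fin n → Matrix ι ι ℚ :=
  fun α γ => if γ = α then 1 else if (γ:ℕ) = (α:ℕ)+1 then -1 else 0

def bQf (Y : Matrix ι ι ℚ) : Fin n → Fin n → Matrix ι ι ℚ :=
  fun γ β => if γ ≤ β then Y ^ ((β:ℕ) - (γ:ℕ)) else 0

def bPHf (a b c : Matrix ι ι ℚ) : Fin n → Fin n → Matrix ι ι ℚ :=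
  fun α γ => bHf a b c α γ - (if h : (α:ℕ)+1 < n then bHf a b c ⟨(α:ℕ)+1, h⟩ γ else 0)

def bTf (a b c Y : Matrix ι ι ℚ) : Fin n → Fin n → Matrix ι ι ℚ :=
  fun α β => ∑ γ, bPHf a b c α γ * bQf Y γ β

lemma bHf_eval (a b c : Matrix ι ι ℚ) (α β : Fin n) :
    bHf a b c α β = if (α:ℕ) = (β:ℕ) then a else if (α:ℕ) < (β:ℕ) then b else c := by
  simp only [bHf, Fin.ext_iff, Fin.lt_def]

lemma master (hn : 1 ≤ n) (a b c Y : Matrix ι ι ℚ) (hY : (a - c) * Y = a - b)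
    (H : Matrix (Fin n × ι) (Fin n × ι) ℚ)
    (hH : ∀ p q : Fin n × ι, H p q =
      if p.1 = q.1 then a p.2 q.2 else if p.1 < q.1 then b p.2 q.2 else c p.2 q.2) :
    H.det = (a - c).det ^ (n - 1) * (a + c * ∑ i ∈ Finset.Icc 1 (n - 1), Y ^ i).det := by
  classical
  have hHc : H = bcomp (bHf a b c) := by
    ext p q
    rw [hH]
    show _ = (if p.1 = q.1 then a else if p.1 < q.1 then b else c) p.2 q.2
    split_ifs <;> rfl
  -- Step A : row operations
  have stepA : ∀ α γ : Fin n, (∑ δ, bPf n ι α δ * bHf a b c δ γ) = bPHf a b c α γ := by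
    intro α γ
    have h1 : ∀ δ : Fin n, bPf n ι α δ * bHf a b c δ γ =
        (if δ = α then bHf a b c δ γ else 0)
          + (if (δ:ℕ) = (α:ℕ)+1 then -(bHf a b c δ γ) else 0) := by
      intro δ
      by_cases h1 : δ = α
      · have h2 : ¬ ((δ:ℕ) = (α:ℕ)+1) := by subst h1; omega
        simp [bPf, h1, h2]
      · by_cases h2 : (δ:ℕ) = (α:ℕ)+1
        · simp [bPf, h1, h2]
        · simp [bPf, h1, h2]
    rw [Finset.sum_congr rfl fun δ _ => h1 δ, Finset.sum_add_distrib]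
    rw [Finset.sum_ite_eq' Finset.univ α (fun δ => bHf a b c δ γ)]
    simp only [Finset.mem_univ, if_true]
    by_cases h : (α:ℕ)+1 < n
    · have h2 : ∀ δ : Fin n, ((δ:ℕ) = (α:ℕ)+1) ↔ (δ = (⟨(α:ℕ)+1, h⟩ : Fin n)) := by
        intro δ; rw [Fin.ext_iff]
      have h3 : (∑ δ : Fin n, if (δ:ℕ) = (α:ℕ)+1 then -(bHf a b c δ γ) else 0)
          = ∑ δ : Fin n, if δ = (⟨(α:ℕ)+1, h⟩ : Fin n) then -(bHf a b c δ γ) else 0 :=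
        Finset.sum_congr rfl fun δ _ => if_congr (h2 δ) rfl rfl
      rw [h3]
      rw [Finset.sum_ite_eq' Finset.univ (⟨(α:ℕ)+1, h⟩ : Fin n) (fun δ => -(bHf a b c δ γ))]
      simp only [Finset.mem_univ, if_true, bPHf, dif_pos h]
      rw [sub_eq_add_neg]
    · have h2 : ∀ δ ∈ (Finset.univ : Finset (Fin n)), (if (δ:ℕ) = (α:ℕ)+1 then -(bHf a b c δ γ) else 0)
          = (0 : Matrix ι ι ℚ) := by
        intro δ _
        rw [if_neg]
        have := δ.isLt
        omega
      rw [Finset.sum_congr rfl h2]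
      simp only [Finset.sum_const_zero, bPHf, dif_neg h, add_zero, sub_zero]
  -- decomposition of the rows of T having a successor
  have stepB : ∀ (α : Fin n) (hs : (α:ℕ)+1 < n) (β : Fin n),
      bTf a b c Y α β = (a - c) * bQf Y α β + (b - a) * bQf Y ⟨(α:ℕ)+1, hs⟩ β := by
    intro α hs β
    have hd : ∀ γ, bPHf a b c α γ =
        (if γ = α then (a-c) else 0) + (if γ = (⟨(α:ℕ)+1, hs⟩ : Fin n) then (b-a) else 0) := by
      intro γ
      have hsv : ((⟨(α:ℕ)+1, hs⟩ : Fin n) : ℕ) = (α:ℕ)+1 := rfl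
      simp only [bPHf, dif_pos hs, bHf_eval, Fin.ext_iff, hsv]
      split_ifs <;> first | (exfalso; omega) | abel
    show (∑ γ, bPHf a b c α γ * bQf Y γ β) = _
    rw [Finset.sum_congr rfl fun γ _ => by rw [hd γ, add_mul]]
    rw [Finset.sum_add_distrib]
    congr 1
    · rw [Finset.sum_congr rfl fun γ _ => by rw [ite_mul, zero_mul]]
      rw [Finset.sum_ite_eq' Finset.univ α (fun γ => (a-c) * bQf Y γ β)]
      simp
    · rw [Finset.sum_congr rfl fun γ _ => by rw [ite_mul, zero_mul]]
      rw [Finset.sum_ite_eq' Finset.univ (⟨(α:ℕ)+1, hs⟩ : Fin n) (fun γ => (b-a) * bQf Y γ β)]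
      simp
  -- strict upper blocks of T vanish
  have stepC : ∀ α β : Fin n, α < β → bTf a b c Y α β = 0 := by
    intro α β hab
    have hab' : (α:ℕ) < (β:ℕ) := hab
    have hs : (α:ℕ)+1 < n := by have := β.isLt; omega
    rw [stepB α hs β]
    have hq1 : bQf Y α β = Y ^ ((β:ℕ) - (α:ℕ)) := if_pos (le_of_lt hab)
    have hq2 : bQf Y (⟨(α:ℕ)+1, hs⟩ : Fin n) β = Y ^ ((β:ℕ) - (α:ℕ) - 1) := by
      have hle : (⟨(α:ℕ)+1, hs⟩ : Fin n) ≤ β := by rw [Fin.le_def]; exact hab'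
      show (if _ ≤ β then _ else _) = _
      rw [if_pos hle]
      congr 1
    obtain ⟨d, hd, hd'⟩ : ∃ d, (β:ℕ) - (α:ℕ) = d + 1 ∧ (β:ℕ) - (α:ℕ) - 1 = d := ⟨_, by omega, rfl⟩
    rw [hq1, hq2, hd', hd, pow_succ', ← mul_assoc, hY, ← add_mul]
    simp
  -- diagonal blocks
  have stepD1 : ∀ (α : Fin n), (α:ℕ) ≠ n - 1 → bTf a b c Y α α = a - c := by
    intro α hα
    have hs : (α:ℕ)+1 < n := by have := α.isLt; omega
    rw [stepB α hs α]
    have hq1 : bQf Y α α = 1 := by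
      show (if _ then _ else _) = _
      rw [if_pos le_rfl, Nat.sub_self, pow_zero]
    have hq2 : bQf Y (⟨(α:ℕ)+1, hs⟩ : Fin n) α = 0 := by
      show (if _ ≤ α then _ else _) = _
      rw [if_neg (by rw [Fin.le_def]; show ¬ ((α:ℕ)+1 ≤ (α:ℕ)); omega)]
    rw [hq1, hq2, mul_one, mul_zero, add_zero]
  have stepD2 : bTf a b c Y (⟨n-1, by omega⟩ : Fin n) (⟨n-1, by omega⟩ : Fin n)
      = a + c * ∑ i ∈ Finset.Icc 1 (n - 1), Y ^ i := by
    set lst : Fin n := ⟨n-1, by omega⟩ with hlst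
    have hnos : ¬ ((lst:ℕ)+1 < n) := by simp only [hlst]; omega
    have h1 : ∀ γ : Fin n, bPHf a b c lst γ * bQf Y γ lst =
        (if γ = lst then a else c * Y ^ ((n-1) - (γ:ℕ))) := by
      intro γ
      have hγ : (γ:ℕ) ≤ n - 1 := by have := γ.isLt; omega
      have hle : γ ≤ lst := by rw [Fin.le_def]; exact hγ
      have hlv : ((lst:Fin n):ℕ) = n - 1 := rfl
      simp only [bPHf, dif_neg hnos, sub_zero, bHf_eval, bQf, if_pos hle, Fin.ext_iff, hlv]
      simp only [dif_neg (show ¬ (n - 1 + 1 < n) by omega), sub_zero]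
      by_cases h : n - 1 = (γ:ℕ)
      · rw [if_pos h, if_pos h.symm, show n - 1 - (γ:ℕ) = 0 by omega, pow_zero, mul_one]
      · rw [if_neg h, if_neg (by omega : ¬ n - 1 < (γ:ℕ)), if_neg (fun hh => h hh.symm)]
    show (∑ γ, bPHf a b c lst γ * bQf Y γ lst) = _
    rw [Finset.sum_congr rfl fun γ _ => h1 γ]
    rw [← Finset.add_sum_erase Finset.univ _ (Finset.mem_univ lst), if_pos rfl]
    congr 1
    have h2 : ∀ γ ∈ Finset.univ.erase lst,
        (if γ = lst then a else c * Y ^ ((n-1) - (γ:ℕ))) = c * Y ^ ((n-1) - (γ:ℕ)) := by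
      intro γ hγ
      rw [if_neg (Finset.ne_of_mem_erase hγ)]
    rw [Finset.sum_congr rfl h2, ← Finset.mul_sum]
    congr 1
    refine Finset.sum_nbij' (fun γ => (n-1) - (γ:ℕ)) (fun m => (⟨n-1-m, by omega⟩ : Fin n))
      ?_ ?_ ?_ ?_ ?_
    · intro γ hγ
      have h3 : (γ:ℕ) ≠ n-1 := by
        have := Finset.ne_of_mem_erase hγ
        rw [Ne, Fin.ext_iff] at this
        exact this
      have := γ.isLt
      simp only [Finset.mem_Icc]
      omega
    · intro m hm
      simp only [Finset.mem_Icc] at hm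
      refine Finset.mem_erase.mpr ⟨?_, Finset.mem_univ _⟩
      rw [Ne, Fin.ext_iff]
      show ¬ (n - 1 - m = n - 1)
      omega
    · intro γ hγ
      have h3 : (γ:ℕ) ≠ n-1 := by
        have := Finset.ne_of_mem_erase hγ
        rw [Ne, Fin.ext_iff] at this
        exact this
      have := γ.isLt
      rw [Fin.ext_iff]
      show n - 1 - (n - 1 - (γ:ℕ)) = (γ:ℕ)
      omega
    · intro m hm
      simp only [Finset.mem_Icc] at hm
      show n - 1 - (n - 1 - m) = m
      omega
    · intro γ _
      rfl
  -- assemble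
  have hdetP : (bcomp (bPf n ι)).det = 1 := by
    rw [det_bcomp_of_upTriangular]
    · have : ∀ α : Fin n, bPf n ι α α = 1 := fun α => if_pos rfl
      simp [this]
    · intro α β hlt
      have : (β:ℕ) < (α:ℕ) := hlt
      rw [bPf, if_neg (by rw [Fin.ext_iff]; omega), if_neg (by omega)]
  have hdetQ : (bcomp (bQf (n := n) Y)).det = 1 := by
    rw [det_bcomp_of_upTriangular]
    · have : ∀ α : Fin n, bQf (n := n) Y α α = 1 := by
        intro α
        show (if _ then _ else _) = _
        rw [if_pos le_rfl, Nat.sub_self, pow_zero]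
      simp [this]
    · intro α β hlt
      have : (β:ℕ) < (α:ℕ) := hlt
      rw [bQf, if_neg (by rw [Fin.le_def]; omega)]
  have hmul : bcomp (bPf n ι) * bcomp (bHf a b c) * bcomp (bQf (n := n) Y) = bcomp (bTf a b c Y) := by
    rw [bcomp_mul, bcomp_mul]
    refine congrArg bcomp ?_
    funext α β
    exact Finset.sum_congr rfl fun γ _ => by rw [stepA α γ]
  have hdetT : (bcomp (bTf (n := n) a b c Y)).det
      = (a + c * ∑ i ∈ Finset.Icc 1 (n - 1), Y ^ i).det * (a - c).det ^ (n - 1) := by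
    rw [det_bcomp_of_lowTriangular _ stepC]
    set lst : Fin n := ⟨n-1, by omega⟩ with hlst
    rw [← Finset.mul_prod_erase Finset.univ _ (Finset.mem_univ lst)]
    rw [stepD2]
    congr 1
    have h2 : ∀ γ ∈ Finset.univ.erase lst, (bTf (n := n) a b c Y γ γ).det = (a - c).det := by
      intro γ hγ
      rw [stepD1]
      have := Finset.ne_of_mem_erase hγ
      rw [Ne, Fin.ext_iff] at this
      exact this
    rw [Finset.prod_congr rfl h2, Finset.prod_const, Finset.card_erase_of_mem (Finset.mem_univ _),
      Finset.card_univ, Fintype.card_fin]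
  calc H.det = (bcomp (bPf n ι)).det * H.det * (bcomp (bQf (n := n) Y)).det := by
        rw [hdetP, hdetQ, one_mul, mul_one]
    _ = (bcomp (bPf n ι) * bcomp (bHf a b c) * bcomp (bQf (n := n) Y)).det := by
        rw [Matrix.det_mul, Matrix.det_mul, hHc]
    _ = (bcomp (bTf (n := n) a b c Y)).det := by rw [hmul]
    _ = (a - c).det ^ (n - 1) * (a + c * ∑ i ∈ Finset.Icc 1 (n - 1), Y ^ i).det := by
        rw [hdetT, mul_comm]

/-- sum against a one-point indicator -/
lemma sum_ind {r : ℕ} (p : ℕ) (hp : p < r) (F : Fin r → ℚ) :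
    (∑ l : Fin r, (if (l:ℕ) = p then (1:ℚ) else 0) * F l) = F ⟨p, hp⟩ := by
  have h : ∀ l : Fin r, (if (l:ℕ) = p then (1:ℚ) else 0) * F l
      = if l = ⟨p,hp⟩ then F l else 0 := by
    intro l
    have : ((l:ℕ) = p) = (l = ⟨p,hp⟩) := propext (by rw [Fin.ext_iff])
    simp only [this]
    split_ifs <;> simp
  rw [Finset.sum_congr rfl fun l _ => h l, Finset.sum_ite_eq' Finset.univ _ F]
  simp

section XS

variable {r : ℕ} (hr : 2 ≤ r) (Nr Mr Sr Xr : Matrix (Fin r) (Fin r) ℚ)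

/-- column sums of X -/
lemma colsumX (hXr : ∀ i j : Fin r, Xr i j =
      if (i : ℕ) = r - 1 then -1
      else if (i : ℕ) + 1 = (j : ℕ) then 1 else 0) (k : Fin r) :
    (∑ l : Fin r, Xr l k) = if (k:ℕ) = 0 then -1 else 0 := by
  by_cases hk : (k:ℕ) = 0
  · have h : ∀ l : Fin r, Xr l k = if l = (⟨r-1, by omega⟩ : Fin r) then -1 else 0 := by
      intro l
      rw [hXr]
      have : (l = (⟨r-1, by omega⟩ : Fin r)) = ((l:ℕ) = r-1) := propext (by rw [Fin.ext_iff])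
      simp only [this]
      have := l.isLt
      split_ifs <;> first | rfl | omega
    rw [Finset.sum_congr rfl fun l _ => h l, Finset.sum_ite_eq' Finset.univ _ (fun _ => (-1:ℚ))]
    simp [hk]
  · have h : ∀ l : Fin r, Xr l k =
        (if l = (⟨r-1, by omega⟩ : Fin r) then -1 else 0)
          + (if l = (⟨(k:ℕ)-1, by omega⟩ : Fin r) then 1 else 0) := by
      intro l
      rw [hXr]
      have e1 : (l = (⟨r-1, by omega⟩ : Fin r)) = ((l:ℕ) = r-1) := propext (by rw [Fin.ext_iff])
      have e2 : (l = (⟨(k:ℕ)-1, by omega⟩ : Fin r)) = ((l:ℕ) = (k:ℕ)-1) :=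
        propext (by rw [Fin.ext_iff])
      simp only [e1, e2]
      have := l.isLt
      have := k.isLt
      split_ifs <;> first | rfl | omega | norm_num
    rw [Finset.sum_congr rfl fun l _ => h l, Finset.sum_add_distrib,
      Finset.sum_ite_eq' Finset.univ _ (fun _ => (-1:ℚ)),
      Finset.sum_ite_eq' Finset.univ _ (fun _ => (1:ℚ))]
    simp [hk]

/-- N·X = M -/
lemma NX_eq_M (hNr : ∀ i j : Fin r, Nr i j = if i ≤ j then -1 else 0)
    (hM : ∀ j k : Fin r, Mr j k = if (k:ℕ) ≤ (j:ℕ) then 1 else 0)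
    (hXr : ∀ i j : Fin r, Xr i j =
      if (i : ℕ) = r - 1 then -1
      else if (i : ℕ) + 1 = (j : ℕ) then 1 else 0) :
    Nr * Xr = Mr := by
  ext j k
  rw [Matrix.mul_apply, hM]
  by_cases hjk : (j:ℕ) < (k:ℕ)
  · have h : ∀ l : Fin r, Nr j l * Xr l k =
        (if l = (⟨r-1, by omega⟩ : Fin r) then 1 else 0)
          + (if l = (⟨(k:ℕ)-1, by omega⟩ : Fin r) then -1 else 0) := by
      intro l
      rw [hNr, hXr]
      have e1 : (l = (⟨r-1, by omega⟩ : Fin r)) = ((l:ℕ) = r-1) := propext (by rw [Fin.ext_iff])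
      have e2 : (l = (⟨(k:ℕ)-1, by omega⟩ : Fin r)) = ((l:ℕ) = (k:ℕ)-1) :=
        propext (by rw [Fin.ext_iff])
      have e3 : (j ≤ l) = ((j:ℕ) ≤ (l:ℕ)) := propext (by rw [Fin.le_def])
      simp only [e1, e2, e3]
      have := l.isLt
      have := k.isLt
      have := j.isLt
      split_ifs <;> first | rfl | omega | norm_num
    rw [Finset.sum_congr rfl fun l _ => h l, Finset.sum_add_distrib,
      Finset.sum_ite_eq' Finset.univ _ (fun _ => (1:ℚ)),
      Finset.sum_ite_eq' Finset.univ _ (fun _ => (-1:ℚ))]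
    simp only [Finset.mem_univ, if_true]
    rw [if_neg (by omega)]
    norm_num
  · have h : ∀ l : Fin r, Nr j l * Xr l k =
        (if l = (⟨r-1, by omega⟩ : Fin r) then 1 else 0) := by
      intro l
      rw [hNr, hXr]
      have e1 : (l = (⟨r-1, by omega⟩ : Fin r)) = ((l:ℕ) = r-1) := propext (by rw [Fin.ext_iff])
      have e3 : (j ≤ l) = ((j:ℕ) ≤ (l:ℕ)) := propext (by rw [Fin.le_def])
      simp only [e1, e3]
      have := l.isLt
      have := k.isLt
      have := j.isLt
      split_ifs <;> first | rfl | omega | norm_num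
    rw [Finset.sum_congr rfl fun l _ => h l,
      Finset.sum_ite_eq' Finset.univ _ (fun _ => (1:ℚ))]
    simp only [Finset.mem_univ, if_true]
    rw [if_pos (by omega)]

end XS

def Wfun (r t : ℕ) : Matrix (Fin r) (Fin r) ℚ :=
  Matrix.of fun i j =>
    if (i:ℕ)+t < r then (if (j:ℕ) = (i:ℕ)+t then 1 else 0)
    else if (i:ℕ)+t = r then -1
    else (if (j:ℕ) = (i:ℕ)+t-(r+1) then 1 else 0)

lemma Wfun_zero {r : ℕ} (hr : 2 ≤ r) : Wfun r 0 = 1 := by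
  ext i j
  have hi := i.isLt
  simp only [Wfun, Matrix.of_apply, Nat.add_zero, if_pos hi, Matrix.one_apply]
  by_cases h : (i:ℕ) = (j:ℕ)
  · rw [if_pos h.symm, if_pos (Fin.ext h)]
  · rw [if_neg (fun hh => h hh.symm), if_neg (fun hh => h (Fin.ext_iff.mp hh))]

lemma Wfun_last {r : ℕ} (hr : 2 ≤ r) : Wfun r (r+1) = 1 := by
  ext i j
  have hi := i.isLt
  simp only [Wfun, Matrix.of_apply, Matrix.one_apply]
  rw [if_neg (by omega), if_neg (by omega)]
  have h2 : (i:ℕ)+(r+1)-(r+1) = (i:ℕ) := by omega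
  rw [h2]
  by_cases h : (i:ℕ) = (j:ℕ)
  · rw [if_pos h.symm, if_pos (Fin.ext h)]
  · rw [if_neg (fun hh => h hh.symm), if_neg (fun hh => h (Fin.ext_iff.mp hh))]

section XS2

variable {r : ℕ}

lemma Wfun_succ (hr : 2 ≤ r) (Xr : Matrix (Fin r) (Fin r) ℚ)
    (hXr : ∀ i j : Fin r, Xr i j =
      if (i : ℕ) = r - 1 then -1
      else if (i : ℕ) + 1 = (j : ℕ) then 1 else 0)
    (t : ℕ) (ht : t ≤ r) : Wfun r (t+1) = Wfun r t * Xr := by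
  ext i j
  rw [Matrix.mul_apply]
  have hi := i.isLt
  have hj := j.isLt
  rcases lt_trichotomy ((i:ℕ)+t) r with hm | hm | hm
  · -- row of Wfun r t is the indicator at i+t
    have hrow : ∀ l : Fin r, Wfun r t i l * Xr l j
        = (if (l:ℕ) = (i:ℕ)+t then (1:ℚ) else 0) * Xr l j := by
      intro l
      simp only [Wfun, Matrix.of_apply, if_pos hm]
    rw [Finset.sum_congr rfl fun l _ => hrow l, sum_ind _ hm]
    rw [hXr]
    have hkey : ((⟨(i:ℕ)+t, hm⟩ : Fin r) : ℕ) = (i:ℕ)+t := rfl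
    rw [hkey]
    show (if (i:ℕ)+(t+1) < r then (if (j:ℕ) = (i:ℕ)+(t+1) then (1:ℚ) else 0)
      else if (i:ℕ)+(t+1) = r then -1
      else (if (j:ℕ) = (i:ℕ)+(t+1)-(r+1) then 1 else 0)) = _
    by_cases h2 : (i:ℕ)+t = r-1
    · rw [if_neg (show ¬ ((i:ℕ)+(t+1) < r) by omega),
        if_pos (show (i:ℕ)+(t+1) = r by omega),
        if_pos (show (i:ℕ)+t = r-1 by omega)]
    · rw [if_pos (show (i:ℕ)+(t+1) < r by omega),
        if_neg (show ¬ ((i:ℕ)+t = r-1) by omega)]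
      by_cases h3 : (j:ℕ) = (i:ℕ)+(t+1)
      · rw [if_pos h3, if_pos (show (i:ℕ)+t+1 = (j:ℕ) by omega)]
      · rw [if_neg h3, if_neg (show ¬ ((i:ℕ)+t+1 = (j:ℕ)) by omega)]
  · -- row of Wfun r t is constant -1
    have hrow : ∀ l : Fin r, Wfun r t i l * Xr l j = -(Xr l j) := by
      intro l
      simp only [Wfun, Matrix.of_apply, if_neg (show ¬ ((i:ℕ)+t < r) by omega), if_pos hm]
      ring
    rw [Finset.sum_congr rfl fun l _ => hrow l, Finset.sum_neg_distrib, colsumX Xr hXr j]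
    show (if (i:ℕ)+(t+1) < r then (if (j:ℕ) = (i:ℕ)+(t+1) then (1:ℚ) else 0)
      else if (i:ℕ)+(t+1) = r then -1
      else (if (j:ℕ) = (i:ℕ)+(t+1)-(r+1) then 1 else 0)) = _
    rw [if_neg (show ¬ ((i:ℕ)+(t+1) < r) by omega),
      if_neg (show ¬ ((i:ℕ)+(t+1) = r) by omega)]
    have h2 : (i:ℕ)+(t+1)-(r+1) = 0 := by omega
    rw [h2]
    by_cases h3 : (j:ℕ) = 0
    · rw [if_pos h3, if_pos h3]; norm_num
    · rw [if_neg h3, if_neg h3]; norm_num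
  · -- wrapped-around indicator row
    have hp : (i:ℕ)+t-(r+1) < r := by omega
    have hp2 : (i:ℕ)+t-(r+1) ≤ r - 2 := by omega
    have hrow : ∀ l : Fin r, Wfun r t i l * Xr l j
        = (if (l:ℕ) = (i:ℕ)+t-(r+1) then (1:ℚ) else 0) * Xr l j := by
      intro l
      simp only [Wfun, Matrix.of_apply, if_neg (show ¬ ((i:ℕ)+t < r) by omega),
        if_neg (show ¬ ((i:ℕ)+t = r) by omega)]
    rw [Finset.sum_congr rfl fun l _ => hrow l, sum_ind _ hp]
    rw [hXr]
    have hkey : ((⟨(i:ℕ)+t-(r+1), hp⟩ : Fin r) : ℕ) = (i:ℕ)+t-(r+1) := rfl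
    rw [hkey]
    show (if (i:ℕ)+(t+1) < r then (if (j:ℕ) = (i:ℕ)+(t+1) then (1:ℚ) else 0)
      else if (i:ℕ)+(t+1) = r then -1
      else (if (j:ℕ) = (i:ℕ)+(t+1)-(r+1) then 1 else 0)) = _
    rw [if_neg (show ¬ ((i:ℕ)+(t+1) < r) by omega),
      if_neg (show ¬ ((i:ℕ)+(t+1) = r) by omega),
      if_neg (show ¬ ((i:ℕ)+t-(r+1) = r-1) by omega)]
    by_cases h3 : (j:ℕ) = (i:ℕ)+(t+1)-(r+1)
    · rw [if_pos h3, if_pos (show (i:ℕ)+t-(r+1)+1 = (j:ℕ) by omega)]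
    · rw [if_neg h3, if_neg (show ¬ ((i:ℕ)+t-(r+1)+1 = (j:ℕ)) by omega)]

lemma Xpow_eq (hr : 2 ≤ r) (Xr : Matrix (Fin r) (Fin r) ℚ)
    (hXr : ∀ i j : Fin r, Xr i j =
      if (i : ℕ) = r - 1 then -1
      else if (i : ℕ) + 1 = (j : ℕ) then 1 else 0) :
    ∀ t, t ≤ r+1 → Xr ^ t = Wfun r t := by
  intro t
  induction t with
  | zero => intro _; rw [pow_zero, Wfun_zero hr]
  | succ t ih =>
    intro ht
    rw [pow_succ, ih (by omega), ← Wfun_succ hr Xr hXr t (by omega)]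

lemma Xpow_cycle (hr : 2 ≤ r) (Xr : Matrix (Fin r) (Fin r) ℚ)
    (hXr : ∀ i j : Fin r, Xr i j =
      if (i : ℕ) = r - 1 then -1
      else if (i : ℕ) + 1 = (j : ℕ) then 1 else 0) :
    Xr ^ (r+1) = 1 := by
  rw [Xpow_eq hr Xr hXr (r+1) le_rfl, Wfun_last hr]

end XS2

def Vfun (r t : ℕ) : Matrix (Fin r) (Fin r) ℚ :=
  Matrix.of fun i j =>
    if (i:ℕ)+t < r then (if (j:ℕ) = (i:ℕ)+t then 1 else 0)
    else -(if (j:ℕ) = (i:ℕ)+t-r then 1 else 0)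

lemma Vfun_zero {r : ℕ} (hr : 2 ≤ r) : Vfun r 0 = 1 := by
  ext i j
  have hi := i.isLt
  simp only [Vfun, Matrix.of_apply, Nat.add_zero, if_pos hi, Matrix.one_apply]
  by_cases h : (i:ℕ) = (j:ℕ)
  · rw [if_pos h.symm, if_pos (Fin.ext h)]
  · rw [if_neg (fun hh => h hh.symm), if_neg (fun hh => h (Fin.ext_iff.mp hh))]

section S2

variable {r : ℕ}

lemma Vfun_succ (hr : 2 ≤ r) (Sr : Matrix (Fin r) (Fin r) ℚ)
    (hSr : ∀ i j : Fin r, Sr i j =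
      if (i : ℕ) + 1 = (j : ℕ) then 1
      else if (i : ℕ) = r - 1 ∧ (j : ℕ) = 0 then -1 else 0)
    (t : ℕ) (ht : t ≤ r - 1) : Vfun r (t+1) = Vfun r t * Sr := by
  ext i j
  rw [Matrix.mul_apply]
  have hi := i.isLt
  have hj := j.isLt
  by_cases hm : (i:ℕ)+t < r
  · have hrow : ∀ l : Fin r, Vfun r t i l * Sr l j
        = (if (l:ℕ) = (i:ℕ)+t then (1:ℚ) else 0) * Sr l j := by
      intro l
      simp only [Vfun, Matrix.of_apply, if_pos hm]
    rw [Finset.sum_congr rfl fun l _ => hrow l, sum_ind _ hm]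
    rw [hSr]
    have hkey : ((⟨(i:ℕ)+t, hm⟩ : Fin r) : ℕ) = (i:ℕ)+t := rfl
    rw [hkey]
    show (if (i:ℕ)+(t+1) < r then (if (j:ℕ) = (i:ℕ)+(t+1) then (1:ℚ) else 0)
      else -(if (j:ℕ) = (i:ℕ)+(t+1)-r then 1 else 0)) = _
    by_cases h2 : (i:ℕ)+t = r-1
    · rw [if_neg (show ¬ ((i:ℕ)+(t+1) < r) by omega),
        if_neg (show ¬ ((i:ℕ)+t+1 = (j:ℕ)) by omega)]
      by_cases h3 : (j:ℕ) = 0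
      · rw [if_pos (show (i:ℕ)+t = r-1 ∧ (j:ℕ) = 0 by omega),
          if_pos (show (j:ℕ) = (i:ℕ)+(t+1)-r by omega)]
      · rw [if_neg (show ¬ ((i:ℕ)+t = r-1 ∧ (j:ℕ) = 0) by omega),
          if_neg (show ¬ ((j:ℕ) = (i:ℕ)+(t+1)-r) by omega)]
        norm_num
    · rw [if_pos (show (i:ℕ)+(t+1) < r by omega)]
      by_cases h3 : (j:ℕ) = (i:ℕ)+(t+1)
      · rw [if_pos h3, if_pos (show (i:ℕ)+t+1 = (j:ℕ) by omega)]
      · rw [if_neg h3, if_neg (show ¬ ((i:ℕ)+t+1 = (j:ℕ)) by omega),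
          if_neg (show ¬ ((i:ℕ)+t = r-1 ∧ (j:ℕ) = 0) by omega)]
  · have hp : (i:ℕ)+t-r < r := by omega
    have hp2 : (i:ℕ)+t-r ≤ r-2 := by omega
    have hrow : ∀ l : Fin r, Vfun r t i l * Sr l j
        = -((if (l:ℕ) = (i:ℕ)+t-r then (1:ℚ) else 0) * Sr l j) := by
      intro l
      simp only [Vfun, Matrix.of_apply, if_neg hm]
      ring
    rw [Finset.sum_congr rfl fun l _ => hrow l, Finset.sum_neg_distrib, sum_ind _ hp]
    rw [hSr]
    have hkey : ((⟨(i:ℕ)+t-r, hp⟩ : Fin r) : ℕ) = (i:ℕ)+t-r := rfl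
    rw [hkey]
    show (if (i:ℕ)+(t+1) < r then (if (j:ℕ) = (i:ℕ)+(t+1) then (1:ℚ) else 0)
      else -(if (j:ℕ) = (i:ℕ)+(t+1)-r then 1 else 0)) = _
    rw [if_neg (show ¬ ((i:ℕ)+(t+1) < r) by omega),
      if_neg (show ¬ ((i:ℕ)+t-r = r-1 ∧ (j:ℕ) = 0) by omega)]
    by_cases h3 : (j:ℕ) = (i:ℕ)+(t+1)-r
    · rw [if_pos h3, if_pos (show (i:ℕ)+t-r+1 = (j:ℕ) by omega)]
    · rw [if_neg h3, if_neg (show ¬ ((i:ℕ)+t-r+1 = (j:ℕ)) by omega)]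

lemma Spow_eq (hr : 2 ≤ r) (Sr : Matrix (Fin r) (Fin r) ℚ)
    (hSr : ∀ i j : Fin r, Sr i j =
      if (i : ℕ) + 1 = (j : ℕ) then 1
      else if (i : ℕ) = r - 1 ∧ (j : ℕ) = 0 then -1 else 0) :
    ∀ t, t ≤ r → Sr ^ t = Vfun r t := by
  intro t
  induction t with
  | zero => intro _; rw [pow_zero, Vfun_zero hr]
  | succ t ih =>
    intro ht
    rw [pow_succ, ih (by omega), ← Vfun_succ hr Sr hSr t (by omega)]

lemma Spow_r (hr : 2 ≤ r) (Sr : Matrix (Fin r) (Fin r) ℚ)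
    (hSr : ∀ i j : Fin r, Sr i j =
      if (i : ℕ) + 1 = (j : ℕ) then 1
      else if (i : ℕ) = r - 1 ∧ (j : ℕ) = 0 then -1 else 0) :
    Sr ^ r = -1 := by
  rw [Spow_eq hr Sr hSr r le_rfl]
  ext i j
  have hi := i.isLt
  simp only [Vfun, Matrix.of_apply, Matrix.neg_apply, Matrix.one_apply]
  rw [if_neg (show ¬ ((i:ℕ)+r < r) by omega)]
  have h2 : (i:ℕ)+r-r = (i:ℕ) := by omega
  rw [h2]
  by_cases h : (i:ℕ) = (j:ℕ)
  · rw [if_pos h.symm, if_pos (Fin.ext h)]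
  · rw [if_neg (fun hh => h hh.symm), if_neg (fun hh => h (Fin.ext_iff.mp hh))]

/-- the key identity A·S = A + S + 1 for A = M + N -/
lemma AS_identity (hr : 2 ≤ r) (A Sr : Matrix (Fin r) (Fin r) ℚ)
    (hA : ∀ j k : Fin r, A j k = if (j:ℕ) = (k:ℕ) then 0 else if (k:ℕ) < (j:ℕ) then 1 else -1)
    (hSr : ∀ i j : Fin r, Sr i j =
      if (i : ℕ) + 1 = (j : ℕ) then 1
      else if (i : ℕ) = r - 1 ∧ (j : ℕ) = 0 then -1 else 0) :
    A * Sr = A + Sr + 1 := by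
  ext j k
  rw [Matrix.mul_apply]
  have hj := j.isLt
  have hk := k.isLt
  have hRHS : (A + Sr + 1) j k = A j k + Sr j k + (if (j:ℕ) = (k:ℕ) then 1 else 0) := by
    simp only [Matrix.add_apply, Matrix.one_apply]
    congr 1
    by_cases h : (j:ℕ) = (k:ℕ)
    · rw [if_pos h, if_pos (Fin.ext h)]
    · rw [if_neg h, if_neg (fun hh => h (Fin.ext_iff.mp hh))]
  rw [hRHS, hA, hSr]
  by_cases hk0 : (k:ℕ) = 0
  · -- column 0 of S : single -1 at row r-1
    have hcol : ∀ l : Fin r, A j l * Sr l k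
        = -((if (l:ℕ) = r-1 then (1:ℚ) else 0) * A j l) := by
      intro l
      rw [hSr]
      have hl := l.isLt
      by_cases h : (l:ℕ) = r-1
      · rw [if_pos h, if_neg (show ¬ ((l:ℕ)+1 = (k:ℕ)) by omega),
          if_pos (show (l:ℕ) = r-1 ∧ (k:ℕ) = 0 by omega)]
        ring
      · rw [if_neg h, if_neg (show ¬ ((l:ℕ)+1 = (k:ℕ)) by omega),
          if_neg (show ¬ ((l:ℕ) = r-1 ∧ (k:ℕ) = 0) by omega)]
        ring
    rw [Finset.sum_congr rfl fun l _ => hcol l, Finset.sum_neg_distrib,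
      sum_ind (r-1) (by omega) (fun l => A j l), hA]
    have hkey : ((⟨r-1, by omega⟩ : Fin r) : ℕ) = r-1 := rfl
    rw [hkey]
    split_ifs <;> first | (exfalso; omega) | norm_num
  · -- column k of S : single 1 at row k-1
    have hcol : ∀ l : Fin r, A j l * Sr l k
        = (if (l:ℕ) = (k:ℕ)-1 then (1:ℚ) else 0) * A j l := by
      intro l
      rw [hSr]
      have hl := l.isLt
      by_cases h : (l:ℕ) = (k:ℕ)-1
      · rw [if_pos h, if_pos (show (l:ℕ)+1 = (k:ℕ) by omega)]
        ring
      · rw [if_neg h, if_neg (show ¬ ((l:ℕ)+1 = (k:ℕ)) by omega),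
          if_neg (show ¬ ((l:ℕ) = r-1 ∧ (k:ℕ) = 0) by omega)]
        ring
    rw [Finset.sum_congr rfl fun l _ => hcol l,
      sum_ind ((k:ℕ)-1) (by omega) (fun l => A j l), hA]
    have hkey : ((⟨(k:ℕ)-1, by omega⟩ : Fin r) : ℕ) = (k:ℕ)-1 := rfl
    rw [hkey]
    split_ifs <;> first | (exfalso; omega) | norm_num

end S2

section Dets

variable {r : ℕ}

lemma detN (hr : 2 ≤ r) (Nr : Matrix (Fin r) (Fin r) ℚ)
    (hNr : ∀ i j : Fin r, Nr i j = if i ≤ j then -1 else 0) :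
    Nr.det = (-1)^r := by
  have ht : Nr.BlockTriangular id := by
    intro i j h
    rw [hNr, if_neg (by exact fun hh => absurd (lt_of_lt_of_le h hh) (lt_irrefl _))]
  rw [Matrix.det_of_upperTriangular ht]
  rw [Finset.prod_congr rfl (fun i _ => by rw [hNr, if_pos le_rfl])]
  rw [Finset.prod_const, Finset.card_univ, Fintype.card_fin]

lemma detnegN (hr : 2 ≤ r) (Nr : Matrix (Fin r) (Fin r) ℚ)
    (hNr : ∀ i j : Fin r, Nr i j = if i ≤ j then -1 else 0) :
    (-Nr).det = 1 := by
  have ht : (-Nr).BlockTriangular id := by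
    intro i j h
    show -(Nr i j) = 0
    rw [hNr, if_neg (by exact fun hh => absurd (lt_of_lt_of_le h hh) (lt_irrefl _))]
    norm_num
  rw [Matrix.det_of_upperTriangular ht]
  rw [Finset.prod_congr rfl (fun i _ => by show -(Nr i i) = _; rw [hNr, if_pos le_rfl]; norm_num :
    ∀ i ∈ Finset.univ, (-Nr) i i = (1:ℚ))]
  rw [Finset.prod_const, one_pow]

lemma detM (hr : 2 ≤ r) (Mr : Matrix (Fin r) (Fin r) ℚ)
    (hM : ∀ j k : Fin r, Mr j k = if (k:ℕ) ≤ (j:ℕ) then 1 else 0) :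
    Mr.det = 1 := by
  have ht : Mr.BlockTriangular OrderDual.toDual := by
    intro i j h
    have : (i:ℕ) < (j:ℕ) := h
    rw [hM, if_neg (by omega)]
  rw [Matrix.det_of_lowerTriangular Mr ht]
  rw [Finset.prod_congr rfl (fun i _ => by rw [hM, if_pos le_rfl] :
    ∀ i ∈ Finset.univ, Mr i i = (1:ℚ))]
  rw [Finset.prod_const, one_pow]

lemma detB (hr : 2 ≤ r) (B : Matrix (Fin r) (Fin r) ℚ)
    (hB : ∀ j k : Fin r, B j k = if (j:ℕ) ≤ (k:ℕ) then 1 else -1) :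
    B.det = 2^(r-1) := by
  classical
  set P2 : Matrix (Fin r) (Fin r) ℚ :=
    Matrix.of fun i l => if l = i then 1 else if (l:ℕ) = (i:ℕ)+1 then -1 else 0 with hP2
  have hP2det : P2.det = 1 := by
    have ht : P2.BlockTriangular id := by
      intro i j h
      have : (j:ℕ) < (i:ℕ) := h
      show (if j = i then (1:ℚ) else if (j:ℕ) = (i:ℕ)+1 then -1 else 0) = 0
      rw [if_neg (by rw [Fin.ext_iff]; omega), if_neg (by omega)]
    rw [Matrix.det_of_upperTriangular ht]
    have hdg : ∀ i ∈ (Finset.univ : Finset (Fin r)), P2 i i = (1:ℚ) := by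
      intro i _
      show (if i = i then (1:ℚ) else if (i:ℕ) = (i:ℕ)+1 then -1 else 0) = 1
      rw [if_pos rfl]
    rw [Finset.prod_congr rfl hdg]
    rw [Finset.prod_const, one_pow]
  have hPB : ∀ i j : Fin r, (P2 * B) i j =
      if (i:ℕ) = r-1 then B i j else (if (j:ℕ) = (i:ℕ) then 2 else 0) := by
    intro i j
    rw [Matrix.mul_apply]
    have hi := i.isLt
    have hj := j.isLt
    have hpt : ∀ l : Fin r, P2 i l * B l j =
        (if l = i then B l j else 0) + (if (l:ℕ) = (i:ℕ)+1 then -(B l j) else 0) := by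
      intro l
      show (if l = i then (1:ℚ) else if (l:ℕ) = (i:ℕ)+1 then -1 else 0) * B l j = _
      by_cases h1 : l = i
      · rw [if_pos h1, if_pos h1, if_neg (by rw [h1]; omega), one_mul, add_zero]
      · rw [if_neg h1]
        by_cases h2 : (l:ℕ) = (i:ℕ)+1
        · rw [if_pos h2, if_pos h2, if_neg h1, zero_add]; ring
        · rw [if_neg h2, if_neg h2, if_neg h1, zero_mul, add_zero]
    rw [Finset.sum_congr rfl fun l _ => hpt l, Finset.sum_add_distrib,
      Finset.sum_ite_eq' Finset.univ i (fun l => B l j)]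
    simp only [Finset.mem_univ, if_true]
    by_cases h : (i:ℕ) = r-1
    · have h2 : ∀ l ∈ (Finset.univ : Finset (Fin r)),
          (if (l:ℕ) = (i:ℕ)+1 then -(B l j) else 0) = (0:ℚ) := by
        intro l _
        rw [if_neg (by have := l.isLt; omega)]
      rw [Finset.sum_congr rfl h2, Finset.sum_const_zero, add_zero, if_pos h]
    · have hs : (i:ℕ)+1 < r := by omega
      have h2 : ∀ l : Fin r, (if (l:ℕ) = (i:ℕ)+1 then -(B l j) else 0)
          = (if l = (⟨(i:ℕ)+1, hs⟩ : Fin r) then -(B l j) else 0) := by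
        intro l
        have e : ((l:ℕ) = (i:ℕ)+1) = (l = (⟨(i:ℕ)+1, hs⟩ : Fin r)) := propext (by rw [Fin.ext_iff])
        simp only [e]
      rw [Finset.sum_congr rfl fun l _ => h2 l,
        Finset.sum_ite_eq' Finset.univ _ (fun l => -(B l j))]
      simp only [Finset.mem_univ, if_true]
      rw [if_neg h, hB, hB]
      have hkey : ((⟨(i:ℕ)+1, hs⟩ : Fin r) : ℕ) = (i:ℕ)+1 := rfl
      rw [hkey]
      split_ifs <;> first | (exfalso; omega) | norm_num
  have hlow : (P2 * B).BlockTriangular OrderDual.toDual := by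
    intro i j h
    have hij : (i:ℕ) < (j:ℕ) := h
    have hj := j.isLt
    rw [hPB, if_neg (by omega), if_neg (by omega)]
  have hdiag : ∀ i : Fin r, (P2 * B) i i = if (i:ℕ) = r-1 then 1 else 2 := by
    intro i
    rw [hPB]
    by_cases h : (i:ℕ) = r-1
    · rw [if_pos h, if_pos h, hB, if_pos le_rfl]
    · rw [if_neg h, if_neg h, if_pos rfl]
  have hTdet : (P2 * B).det = 2^(r-1) := by
    rw [Matrix.det_of_lowerTriangular _ hlow]
    set lst : Fin r := ⟨r-1, by omega⟩ with hlst
    rw [← Finset.mul_prod_erase Finset.univ _ (Finset.mem_univ lst)]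
    rw [hdiag lst, if_pos rfl, one_mul]
    rw [Finset.prod_congr rfl (fun i hi => by
      rw [hdiag i, if_neg (by
        have := Finset.ne_of_mem_erase hi
        rw [Ne, Fin.ext_iff] at this
        exact this)])]
    rw [Finset.prod_const, Finset.card_erase_of_mem (Finset.mem_univ _),
      Finset.card_univ, Fintype.card_fin]
  have := Matrix.det_mul P2 B
  rw [hP2det, one_mul] at this
  rw [← this, hTdet]

end Dets

lemma sum_shift {ι : Type} [Fintype ι] [DecidableEq ι] (M N Y : Matrix ι ι ℚ)
    (h : M * Y = N) (n : ℕ) (hn : 1 ≤ n) :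
    M * (∑ i ∈ Finset.range (n+1), Y^i)
      = (M + N) + N * ∑ i ∈ Finset.Icc 1 (n-1), Y^i := by
  have hicc : (∑ i ∈ Finset.Icc 1 (n-1), Y^i) = ∑ i ∈ Finset.range (n-1), Y^(1+i) := by
    rw [← Finset.Ico_add_one_right_eq_Icc, show n-1+1 = n by omega, Finset.sum_Ico_eq_sum_range]
  have h1 : (∑ i ∈ Finset.range (n+1), Y^i) = (∑ i ∈ Finset.range n, Y^(i+1)) + 1 := by
    rw [Finset.sum_range_succ', pow_zero]
  have h3 : ∀ i : ℕ, M * Y^(i+1) = N * Y^i := by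
    intro i; rw [pow_succ', ← mul_assoc, h]
  have h4 : (∑ i ∈ Finset.range n, N * Y^i) = N + N * ∑ i ∈ Finset.range (n-1), Y^(1+i) := by
    conv_lhs => rw [show n = (n-1)+1 by omega]
    rw [Finset.sum_range_succ', pow_zero, mul_one, Finset.mul_sum]
    rw [add_comm]
    congr 1
    exact Finset.sum_congr rfl fun i _ => by rw [add_comm 1 i]
  rw [h1, mul_add, mul_one, Finset.mul_sum,
    Finset.sum_congr rfl fun i _ => h3 i, h4, hicc]
  abel

/-- determinant reductions `det H = (unit factor) · det F` for the
Dipper–Donkin, FRT, Combined I and Combined II matrices. -/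
theorem stmt_2 (n r : ℕ) (hn : 2 ≤ n) (hr : 2 ≤ r)
    (Nr Mr Sr Xr : Matrix (Fin r) (Fin r) ℚ)
    (hNr : ∀ i j : Fin r, Nr i j = if i ≤ j then -1 else 0)
    (hMr : Mr = -Nrᵀ)
    (hSr : ∀ i j : Fin r, Sr i j =
      if (i : ℕ) + 1 = (j : ℕ) then 1
      else if (i : ℕ) = r - 1 ∧ (j : ℕ) = 0 then -1 else 0)
    (hXr : ∀ i j : Fin r, Xr i j =
      if (i : ℕ) = r - 1 then -1
      else if (i : ℕ) + 1 = (j : ℕ) then 1 else 0)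
    (HD HS HCI HCII : Matrix (Fin n × Fin r) (Fin n × Fin r) ℚ)
    (hHD : ∀ (α β : Fin n) (j k : Fin r), HD (α, j) (β, k) =
      if α = β then 0 else if α < β then Mr j k else Nr j k)
    (hHS : ∀ (α β : Fin n) (j k : Fin r), HS (α, j) (β, k) =
      if α = β then (-(Mr + Nr)) j k
      else if α < β then (1 : Matrix (Fin r) (Fin r) ℚ) j k
      else (-1 : Matrix (Fin r) (Fin r) ℚ) j k)
    (hHCI : ∀ (α β : Fin n) (j k : Fin r), HCI (α, j) (β, k) =
      if α = β then (Mr + Nr) j k else if α < β then Mr j k else Nr j k)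
    (hHCII : ∀ (α β : Fin n) (j k : Fin r), HCII (α, j) (β, k) =
      if α = β then (Mr + Nr) j k else if α < β then Nr j k else Mr j k) :
    HD.det = (Nr * ∑ i ∈ Finset.Icc 1 (n - 1), Xr ^ i).det ∧
    HS.det = 2 ^ ((r - 1) * (n - 1)) * ((1 + Sr ^ n) * (1 - Sr)⁻¹).det ∧
    HCI.det = (Mr * ∑ i ∈ Finset.range (n + 1), (Xr ^ r) ^ i).det ∧
    HCII.det = (-1 : ℚ) ^ (r * (n - 1)) * (Nr * ∑ i ∈ Finset.range (n + 1), Xr ^ i).det := by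
  haveI : Nonempty (Fin r) := ⟨⟨0, by omega⟩⟩
  have hrn : 1 ≤ n := by omega
  -- entrywise description of M
  have hM : ∀ j k : Fin r, Mr j k = if (k:ℕ) ≤ (j:ℕ) then 1 else 0 := by
    intro j k
    rw [hMr]
    show -(Nr k j) = _
    rw [hNr]
    by_cases h : k ≤ j
    · rw [if_pos h, if_pos (Fin.le_def.mp h)]; norm_num
    · rw [if_neg h, if_neg (fun hh => h (Fin.le_def.mpr hh))]; norm_num
  have hNX : Nr * Xr = Mr := NX_eq_M Nr Mr Xr hNr hM hXr
  have hXcyc : Xr ^ (r+1) = 1 := Xpow_cycle hr Xr hXr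
  have hMXr : Mr * Xr ^ r = Nr := by
    rw [← hNX, mul_assoc, ← pow_succ', hXcyc, mul_one]
  have hA : ∀ j k : Fin r, (Mr + Nr) j k
      = if (j:ℕ) = (k:ℕ) then 0 else if (k:ℕ) < (j:ℕ) then 1 else -1 := by
    intro j k
    rw [Matrix.add_apply, hM, hNr]
    have e : (j ≤ k) = ((j:ℕ) ≤ (k:ℕ)) := propext Fin.le_def
    simp only [e]
    split_ifs <;> first | (exfalso; omega) | norm_num
  have hAS : (Mr + Nr) * Sr = (Mr + Nr) + Sr + 1 := AS_identity hr (Mr+Nr) Sr hA hSr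
  have hSpow : Sr ^ r = -1 := Spow_r hr Sr hSr
  refine ⟨?_, ?_, ?_, ?_⟩
  · -- Dipper–Donkin
    have hh : ∀ p q : Fin n × Fin r, HD p q =
        if p.1 = q.1 then (0 : Matrix (Fin r) (Fin r) ℚ) p.2 q.2
        else if p.1 < q.1 then Mr p.2 q.2 else Nr p.2 q.2 := by
      intro p q
      obtain ⟨α, j⟩ := p; obtain ⟨β, k⟩ := q
      rw [hHD α β j k]
      split_ifs <;> rfl
    have hY : ((0 : Matrix (Fin r) (Fin r) ℚ) - Nr) * Xr = 0 - Mr := by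
      rw [zero_sub, zero_sub, neg_mul, hNX]
    rw [master hrn 0 Mr Nr Xr hY HD hh, zero_sub, detnegN hr Nr hNr, one_pow, one_mul,
      zero_add]
  · -- FRT
    have hh : ∀ p q : Fin n × Fin r, HS p q =
        if p.1 = q.1 then (-(Mr + Nr)) p.2 q.2
        else if p.1 < q.1 then (1 : Matrix (Fin r) (Fin r) ℚ) p.2 q.2
        else (-1 : Matrix (Fin r) (Fin r) ℚ) p.2 q.2 := by
      intro p q
      obtain ⟨α, j⟩ := p; obtain ⟨β, k⟩ := q
      exact hHS α β j k
    have hY : (-(Mr + Nr) - (-1)) * Sr = -(Mr + Nr) - 1 := by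
      rw [show (-(Mr + Nr) - (-1) : Matrix (Fin r) (Fin r) ℚ) = 1 - (Mr + Nr) by abel,
        sub_mul, one_mul, hAS]
      abel
    rw [master hrn (-(Mr+Nr)) 1 (-1) Sr hY HS hh]
    have hBd : (1 - (Mr + Nr) : Matrix (Fin r) (Fin r) ℚ).det = 2^(r-1) := by
      refine detB hr _ ?_
      intro j k
      show (1 : Matrix (Fin r) (Fin r) ℚ) j k - (Mr+Nr) j k = _
      rw [hA]
      have e : (1 : Matrix (Fin r) (Fin r) ℚ) j k = if (j:ℕ) = (k:ℕ) then 1 else 0 := by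
        rw [Matrix.one_apply]
        by_cases h : j = k
        · rw [if_pos h, if_pos (Fin.ext_iff.mp h)]
        · rw [if_neg h, if_neg (fun hh => h (Fin.ext hh))]
      rw [e]
      split_ifs <;> first | (exfalso; omega) | norm_num
    -- invertibility of 1 - S
    have h2smul : (2⁻¹:ℚ) • (2 : Matrix (Fin r) (Fin r) ℚ) = 1 := by
      rw [show (2 : Matrix (Fin r) (Fin r) ℚ) = (2:ℚ) • (1: Matrix (Fin r) (Fin r) ℚ) from
        by rw [two_smul, one_add_one_eq_two], smul_smul]
      norm_num
    have hS2 : (1 - Sr) * (∑ i ∈ Finset.range r, Sr^i) = 2 := by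
      rw [show (1 - Sr) = -(Sr - 1) from (neg_sub Sr 1).symm, neg_mul, mul_geom_sum, hSpow,
        show ((2:Matrix (Fin r) (Fin r) ℚ)) = 1 + 1 from one_add_one_eq_two.symm]
      abel
    have hS2' : (∑ i ∈ Finset.range r, Sr^i) * (1 - Sr) = 2 := by
      rw [show (1 - Sr) = -(Sr - 1) from (neg_sub Sr 1).symm, mul_neg, geom_sum_mul, hSpow,
        show ((2:Matrix (Fin r) (Fin r) ℚ)) = 1 + 1 from one_add_one_eq_two.symm]
      abel
    haveI hinv : Invertible (1 - Sr) :=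
      ⟨(2⁻¹:ℚ) • ∑ i ∈ Finset.range r, Sr^i,
        by rw [Matrix.smul_mul, hS2', h2smul],
        by rw [Matrix.mul_smul, hS2, h2smul]⟩
    have hu : IsUnit (1 - Sr).det := (Matrix.isUnit_iff_isUnit_det _).mp (isUnit_of_invertible _)
    -- geometric series identities
    have hsplitn : (∑ i ∈ Finset.range n, Sr^i) = (∑ i ∈ Finset.range (n-1), Sr^(i+1)) + 1 := by
      conv_lhs => rw [show n = (n-1)+1 by omega]
      rw [Finset.sum_range_succ', pow_zero]
    have hiccS : (∑ i ∈ Finset.Icc 1 (n-1), Sr^i) = ∑ i ∈ Finset.range (n-1), Sr^(i+1) := by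
      rw [← Finset.Ico_add_one_right_eq_Icc, show n-1+1 = n by omega, Finset.sum_Ico_eq_sum_range]
      exact Finset.sum_congr rfl fun i _ => by rw [add_comm]
    have hgeomn : (∑ i ∈ Finset.range n, Sr^i) * (1 - Sr) = 1 - Sr^n := by
      rw [show (1 - Sr) = -(Sr - 1) from (neg_sub Sr 1).symm, mul_neg, geom_sum_mul, neg_sub]
    have key : (-(Mr+Nr) + (-1) * ∑ i ∈ Finset.Icc 1 (n-1), Sr^i) * (1 - Sr) = 1 + Sr^n := by
      have hAs : (Mr+Nr) * (1 - Sr) = -(Sr + 1) := by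
        rw [mul_sub, mul_one, hAS]; abel
      have e2 : (∑ i ∈ Finset.range (n-1), Sr^(i+1)) = (∑ i ∈ Finset.range n, Sr^i) - 1 := by
        rw [hsplitn]; abel
      have hGs : (∑ i ∈ Finset.Icc 1 (n-1), Sr^i) * (1 - Sr) = (1 - Sr^n) - (1 - Sr) := by
        rw [hiccS, e2, sub_mul, one_mul, hgeomn]
      rw [add_mul, neg_mul, hAs, neg_one_mul, neg_mul, hGs]
      abel
    have hfinal : (-(Mr+Nr) + (-1) * ∑ i ∈ Finset.Icc 1 (n-1), Sr^i)
        = (1 + Sr^n) * (1 - Sr)⁻¹ := by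
      rw [← key, mul_assoc, Matrix.mul_nonsing_inv _ hu, mul_one]
    rw [show (-(Mr + Nr) - (-1) : Matrix (Fin r) (Fin r) ℚ) = 1 - (Mr + Nr) by abel,
      hBd, hfinal, ← pow_mul]
  · -- Combined I
    have hh : ∀ p q : Fin n × Fin r, HCI p q =
        if p.1 = q.1 then (Mr + Nr) p.2 q.2
        else if p.1 < q.1 then Mr p.2 q.2 else Nr p.2 q.2 := by
      intro p q
      obtain ⟨α, j⟩ := p; obtain ⟨β, k⟩ := q
      exact hHCI α β j k
    have hY : ((Mr + Nr) - Nr) * (Xr^r) = (Mr + Nr) - Mr := by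
      rw [add_sub_cancel_right, add_sub_cancel_left, hMXr]
    rw [master hrn (Mr + Nr) Mr Nr (Xr^r) hY HCI hh, add_sub_cancel_right,
      detM hr Mr hM, one_pow, one_mul, ← sum_shift Mr Nr (Xr^r) hMXr n hrn]
  · -- Combined II
    have hh : ∀ p q : Fin n × Fin r, HCII p q =
        if p.1 = q.1 then (Mr + Nr) p.2 q.2
        else if p.1 < q.1 then Nr p.2 q.2 else Mr p.2 q.2 := by
      intro p q
      obtain ⟨α, j⟩ := p; obtain ⟨β, k⟩ := q
      exact hHCII α β j k
    have hY : ((Mr + Nr) - Mr) * Xr = (Mr + Nr) - Nr := by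
      rw [add_sub_cancel_left, add_sub_cancel_right, hNX]
    rw [master hrn (Mr + Nr) Nr Mr Xr hY HCII hh, add_sub_cancel_left,
      detN hr Nr hNr, ← pow_mul]
    rw [show (Mr + Nr) + Mr * ∑ i ∈ Finset.Icc 1 (n-1), Xr^i
        = Nr * ∑ i ∈ Finset.range (n+1), Xr^i from by
      rw [sum_shift Nr Mr Xr hNX n hrn]; abel]
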